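/- For every integer n with 0 ≤ n ≤ 2g, the identity γ₁₂ⁿ ∧ γ̂^{2g−n} = ( Σ_{k=0}^{⌊(2g−n)/2⌋} (−1)^k · (2g−2k)!·(2g−n)!·g! / ((2g−2k−n)!·k!·(g−k)!) ) · Ω holds, where Ω = ⋀_{j=1}^{g} ( d₁ʲ ∧ d₂ʲ ∧ d₁^{j+g} ∧ d₂^{j+g} ) is the top-degree generator. -/

import Mathlib

set_option linter.unusedSectionVars false
set_option linter.unusedTactic false


section rel
variable {A : Type*} [Ring A]

lemma sw {a b : A} (h : b*a = -(a*b)) (c : A) : b*(a*c) = -(a*(b*c)) := by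
  rw [← mul_assoc, h, neg_mul, mul_assoc]

lemma sqz {a : A} (h : a*a = 0) (c : A) : a*(a*c) = 0 := by
  rw [← mul_assoc, h, zero_mul]

variable (x y u v : A)
  (hx : x*x=0) (hy : y*y=0) (hu : u*u=0) (hv : v*v=0)
  (hyx : y*x = -(x*y)) (hux : u*x = -(x*u)) (hvx : v*x = -(x*v))
  (huy : u*y = -(y*u)) (hvy : v*y = -(y*v)) (hvu : v*u = -(u*v))

include hx hy hu hv hyx hux hvx huy hvy hvu in
lemma R2 : (x*v + y*u) * (x*v + y*u) = x*y*u*v + x*y*u*v := by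
  simp only [mul_add, add_mul, mul_assoc]
  simp [sw hyx, sw hux, sw hvx, sw huy, sw hvy, sw hvu, sqz hx, sqz hy, sqz hu, sqz hv,
    hx, hy, hu, hv, hyx, hux, hvx, huy, hvy, hvu, mul_neg, neg_mul]

include hx hy hu hv hyx hux hvx huy hvy hvu in
lemma R3 : (x*v + y*u) * (x*u + y*v + (x*v + y*u)) = x*y*u*v + x*y*u*v := by
  simp only [mul_add, add_mul, mul_assoc]
  simp [sw hyx, sw hux, sw hvx, sw huy, sw hvy, sw hvu, sqz hx, sqz hy, sqz hu, sqz hv,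
    hx, hy, hu, hv, hyx, hux, hvx, huy, hvy, hvu, mul_neg, neg_mul]

include hx hy hu hv hyx hux hvx huy hvy hvu in
lemma R1 : (x*u + y*v + (x*v + y*u)) * (x*u + y*v + (x*v + y*u)) = 0 := by
  simp only [mul_add, add_mul, mul_assoc]
  simp [sw hyx, sw hux, sw hvx, sw huy, sw hvy, sw hvu, sqz hx, sqz hy, sqz hu, sqz hv,
    hx, hy, hu, hv, hyx, hux, hvx, huy, hvy, hvu, mul_neg, neg_mul]

include hx hy hu hv hyx hux hvx huy hvy hvu in
lemma R4 : (x*y*u*v) * (x*v + y*u) = 0 := by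
  simp only [mul_add, add_mul, mul_assoc]
  simp [sw hyx, sw hux, sw hvx, sw huy, sw hvy, sw hvu, sqz hx, sqz hy, sqz hu, sqz hv,
    hx, hy, hu, hv, hyx, hux, hvx, huy, hvy, hvu, mul_neg, neg_mul]

include hx hy hu hv hyx hux hvx huy hvy hvu in
lemma R5 : (x*y*u*v) * (x*u + y*v + (x*v + y*u)) = 0 := by
  simp only [mul_add, add_mul, mul_assoc]
  simp [sw hyx, sw hux, sw hvx, sw huy, sw hvy, sw hvu, sqz hx, sqz hy, sqz hu, sqz hv,
    hx, hy, hu, hv, hyx, hux, hvx, huy, hvy, hvu, mul_neg, neg_mul]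
end rel

section binom
variable {R : Type*} [CommRing R]

lemma pow_add_sq_zero (x y : R) (hx : x*x = 0) (m : ℕ) :
    (x+y)^m = y^m + m•(x*y^(m-1)) := by
  induction m with
  | zero => simp
  | succ k ih =>
    rw [pow_succ, ih]
    cases k with
    | zero => simp; ring
    | succ j =>
      simp only [Nat.add_sub_cancel, nsmul_eq_mul]
      push_cast
      linear_combination (((j:R)+1)*y^j) * hx

lemma pow_add_cube_zero (x y : R) (hx : x*x*x = 0) (m : ℕ) :
    (x+y)^m = y^m + m•(x*y^(m-1)) + (m.choose 2)•(x*x*y^(m-2)) := by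
  induction m with
  | zero => simp
  | succ k ih =>
    rw [pow_succ, ih]
    cases k with
    | zero => simp; ring
    | succ j =>
      cases j with
      | zero => simp [Nat.choose]; ring
      | succ i =>
        have hc : (i+1+1+1).choose 2 = (i+1+1).choose 2 + (i+1+1) := by
          rw [Nat.choose_succ_succ (i+1+1) 1, Nat.choose_one_right, Nat.add_comm]
        rw [hc]
        simp only [Nat.add_sub_cancel, nsmul_eq_mul, show i+1+1-2 = i by omega,
          show i+1+1+1-2 = i+1 by omega]
        push_cast
        linear_combination (((i+2).choose 2 : ℕ) * y^i : R) * hx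
end binom

def stepc (G m n : ℕ) : ℕ :=
  if m + n = 2*G then G.choose n * m.factorial * n.factorial * 2^n else 0

lemma two_choose_two (k : ℕ) : 2 * (k+2).choose 2 = (k+2)*(k+1) := by
  induction k with
  | zero => rfl
  | succ j ih =>
    have : (j+3).choose 2 = (j+2).choose 2 + (j+2) := by
      rw [Nat.choose_succ_succ (j+2) 1, Nat.choose_one_right, Nat.add_comm]
    rw [this, Nat.mul_add, ih]; ring

lemma stepc_rec (G m n : ℕ) (h : 2*(G+1) ≤ m+n) :
    stepc (G+1) m n = 2*(m*n*stepc G (m-1) (n-1) + m.choose 2 * stepc G (m-2) n) := by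
  unfold stepc
  by_cases hmn : m + n = 2*(G+1)
  · rw [if_pos hmn]
    match m, n with
    | 0, n =>
      rw [if_neg (by omega), if_neg (by omega)]
      have : (G+1).choose n = 0 := Nat.choose_eq_zero_of_lt (by omega)
      simp [this]
    | m+1, 0 =>
      rw [if_neg (by omega)]
      have hm : m = 2*G+1 := by omega
      subst hm
      rw [if_pos (by omega)]
      simp only [Nat.choose_zero_right, Nat.factorial_zero, pow_zero, Nat.mul_one, Nat.one_mul,
        Nat.mul_zero, Nat.zero_mul, Nat.add_zero, Nat.zero_add]
      rw [show 2*G+1+1-2 = 2*G by omega]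
      calc (2*G+1+1).factorial = (2*G+2)*((2*G+1)*(2*G).factorial) := by
            rw [show 2*G+1+1 = 2*G+2 by omega, Nat.factorial_succ, Nat.factorial_succ]
          _ = (2*(2*G+2).choose 2) * (2*G).factorial := by rw [two_choose_two]; ring
          _ = 2*((2*G+1+1).choose 2 * (2*G).factorial) := by
            rw [show 2*G+1+1 = 2*G+2 by omega]; ring
    | m+1, n+1 =>
      simp only [Nat.add_sub_cancel]
      rw [if_pos (by omega)]
      have hmn' : m + n = 2*G := by omega
      match m with
      | 0 =>
        rw [if_neg (by omega)]
        have hn : n = 2*G := by omega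
        subst hn
        rcases Nat.eq_zero_or_pos G with hG | hG
        · subst hG; decide
        · have h1 : (G+1).choose (2*G+1) = 0 := Nat.choose_eq_zero_of_lt (by omega)
          have h2 : G.choose (2*G) = 0 := Nat.choose_eq_zero_of_lt (by omega)
          simp [h1, h2]
      | m+1 =>
        rw [if_pos (by omega)]
        simp only [show m+1+1-2 = m by omega]
        rw [Nat.choose_succ_succ G n]
        rw [show (m+1+1).factorial = (m+2)*(m+1)*m.factorial by
          rw [Nat.factorial_succ, Nat.factorial_succ]; ring]
        rw [show (n+1).factorial = (n+1)*n.factorial from Nat.factorial_succ n]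
        rw [show (m+1).factorial = (m+1)*m.factorial from Nat.factorial_succ m]
        rw [pow_succ]
        have h2 := two_choose_two m
        zify at h2 ⊢
        linear_combination (-((G.choose (n+1) : ℤ) * (m.factorial : ℤ) *
          (((n:ℤ)+1)*(n.factorial : ℤ)) * (2^n*2))) * h2
  · rw [if_neg hmn, if_neg (by omega), if_neg (by omega)]
    simp

lemma key {R : Type*} [CommRing R] {I : Type*} (τ θ Ω : I → R) :
    ∀ (L : List I),
    (∀ j ∈ L, θ j * θ j = 0) → (∀ j ∈ L, τ j * τ j = Ω j + Ω j) →
    (∀ j ∈ L, τ j * θ j = Ω j + Ω j) → (∀ j ∈ L, Ω j * τ j = 0) → (∀ j ∈ L, Ω j * θ j = 0) →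
    ∀ m n : ℕ, 2*L.length ≤ m+n →
    (L.map τ).sum ^ m * (L.map θ).sum ^ n = stepc L.length m n • (L.map Ω).prod := by
  intro L
  induction L with
  | nil =>
    intro _ _ _ _ _ m n _
    simp only [List.map_nil, List.sum_nil, List.prod_nil, List.length_nil]
    match m, n with
    | 0, 0 => simp [stepc]
    | m+1, n => simp [stepc, zero_pow]
    | 0, n+1 => simp [stepc, zero_pow]
  | cons a L ih =>
    intro hθθ hττ hτθ hΩτ hΩθ m n h
    have hθθa := hθθ a (by simp); have hττa := hττ a (by simp)
    have hτθa := hτθ a (by simp); have hΩτa := hΩτ a (by simp)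
    have hΩθa := hΩθ a (by simp)
    have ih' := ih (fun j hj => hθθ j (by simp [hj])) (fun j hj => hττ j (by simp [hj]))
      (fun j hj => hτθ j (by simp [hj])) (fun j hj => hΩτ j (by simp [hj]))
      (fun j hj => hΩθ j (by simp [hj]))
    simp only [List.map_cons, List.sum_cons, List.prod_cons, List.length_cons] at *
    set T := (L.map τ).sum with hT
    set Θ := (L.map θ).sum with hΘ
    set P := (L.map Ω).prod with hP
    set G := L.length with hG
    have hτ3 : τ a * τ a * τ a = 0 := by rw [hττa, add_mul, hΩτa, add_zero]
    rw [pow_add_cube_zero (τ a) T hτ3 m, pow_add_sq_zero (θ a) Θ hθθa n]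
    have e1 : T^m * Θ^n = 0 := by
      rw [ih' m n (by omega)]
      have : stepc G m n = 0 := by unfold stepc; rw [if_neg (by omega)]
      rw [this, zero_smul]
    have e4 : T^(m-1) * Θ^n = 0 := by
      rw [ih' (m-1) n (by omega)]
      have : stepc G (m-1) n = 0 := by unfold stepc; rw [if_neg (by omega)]
      rw [this, zero_smul]
    have e5 : T^m * Θ^(n-1) = 0 := by
      rw [ih' m (n-1) (by omega)]
      have : stepc G m (n-1) = 0 := by unfold stepc; rw [if_neg (by omega)]
      rw [this, zero_smul]
    have e2 : T^(m-1) * Θ^(n-1) = (stepc G (m-1) (n-1) : R) * P := by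
      rw [ih' (m-1) (n-1) (by omega), nsmul_eq_mul]
    have e3 : T^(m-2) * Θ^n = (stepc G (m-2) n : R) * P := by
      rw [ih' (m-2) n (by omega), nsmul_eq_mul]
    rw [show G + 1 = L.length + 1 from rfl] at *
    rw [stepc_rec G m n (by omega)]
    simp only [nsmul_eq_mul, Nat.cast_mul, Nat.cast_ofNat, Nat.cast_add]
    linear_combination e1
      + ((n:R)*θ a) * e5
      + ((m:R)*τ a) * e4
      + ((m:R)*(n:R)*τ a*θ a) * e2
      + ((m:R)*(n:R)*(stepc G (m-1) (n-1):R)*P) * hτθa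
      + ((m.choose 2:R)*τ a*τ a) * e3
      + ((m.choose 2:R)*(stepc G (m-2) n:R)*P) * hττa
      + ((m.choose 2:R)*(n:R)*θ a*T^(m-2)*Θ^(n-1)) * hττa
      + (2*(m.choose 2:R)*(n:R)*T^(m-2)*Θ^(n-1)) * hΩθa

open Polynomial Finset

lemma sum_choose_eq (g m : ℕ) (hm : m ≤ 2*g) :
    ∑ k ∈ range (g+1), (-1:ℝ)^k * ((2*g-2*k).choose m) * (g.choose k) =
      (g.choose (2*g-m)) * 2^(2*g-m) := by
  have hpoly : ((X:ℝ[X])^2 + 2*X)^g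
      = ∑ k ∈ range (g+1), Polynomial.C ((-1:ℝ)^k * (g.choose k)) * ((X+1)^(2*(g-k))) := by
    have h := add_pow (-1 : ℝ[X]) ((X+1)^2) g
    rw [show (-1 + ((X:ℝ[X])+1)^2) = X^2+2*X by ring] at h
    rw [h]
    refine Finset.sum_congr rfl fun k hk => ?_
    rw [← pow_mul]
    simp only [map_mul, map_pow, map_neg, map_one, Polynomial.C_eq_natCast]
    ring
  have hc := congrArg (fun p => Polynomial.coeff p m) hpoly
  simp only [finset_sum_coeff, coeff_C_mul, coeff_X_add_one_pow] at hc
  have hL : ((X:ℝ[X])^2 + 2*X)^g = (X + Polynomial.C 2)^g * X^g := by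
    rw [← mul_pow, show ((X:ℝ[X]) + Polynomial.C 2) * X = X^2 + 2*X by
      rw [show Polynomial.C (2:ℝ) = 2 from map_ofNat _ 2]; ring]
  rw [hL, coeff_mul_X_pow'] at hc
  have hsum : ∑ k ∈ range (g+1), (-1:ℝ)^k * ((2*g-2*k).choose m) * (g.choose k)
      = ∑ k ∈ range (g+1), (-1:ℝ)^k * ↑(g.choose k) * ((2*(g-k)).choose m) := by
    refine Finset.sum_congr rfl fun k hk => ?_
    rw [show 2*(g-k) = 2*g-2*k by omega]
    ring
  rw [hsum, ← hc]
  by_cases hgm : g ≤ m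
  · rw [if_pos hgm, coeff_X_add_C_pow]
    rw [show g - (m-g) = 2*g-m by omega, show g.choose (m-g) = g.choose (2*g-m) by
      rw [show 2*g-m = g-(m-g) by omega]; exact (Nat.choose_symm (by omega)).symm]
    push_cast
    ring
  · rw [if_neg hgm]
    rw [Nat.choose_eq_zero_of_lt (by omega)]
    simp

lemma partB (g m : ℕ) (hm : m ≤ 2*g) :
    ∑ k ∈ Finset.range ((2*g-m)/2+1),
      (-1:ℝ)^k * ((2*g-2*k).factorial : ℝ) * ((2*g-m).factorial : ℝ) * (g.factorial : ℝ) /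
        (((2*g-2*k-m).factorial : ℝ) * (k.factorial : ℝ) * ((g-k).factorial : ℝ))
    = ((g.choose (2*g-m) * m.factorial * (2*g-m).factorial * 2^(2*g-m) : ℕ) : ℝ) := by
  have step1 : ∀ k ∈ range ((2*g-m)/2+1),
      (-1:ℝ)^k * ((2*g-2*k).factorial : ℝ) * ((2*g-m).factorial : ℝ) * (g.factorial : ℝ) /
        (((2*g-2*k-m).factorial : ℝ) * (k.factorial : ℝ) * ((g-k).factorial : ℝ))
      = ((-1:ℝ)^k * ((2*g-2*k).choose m) * (g.choose k)) *
          ((m.factorial : ℝ) * ((2*g-m).factorial : ℝ)) := by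
    intro k hk
    rw [Finset.mem_range] at hk
    have hkm : m ≤ 2*g-2*k := by omega
    have hkg : k ≤ g := by omega
    have f1 : (2*g-2*k).factorial = (2*g-2*k).choose m * m.factorial * (2*g-2*k-m).factorial :=
      (Nat.choose_mul_factorial_mul_factorial hkm).symm
    have f2 : g.factorial = g.choose k * k.factorial * (g-k).factorial :=
      (Nat.choose_mul_factorial_mul_factorial hkg).symm
    rw [f1, f2]
    have h1 : ((2*g-2*k-m).factorial : ℝ) ≠ 0 := Nat.cast_ne_zero.2 (Nat.factorial_ne_zero _)
    have h2 : ((k.factorial : ℕ) : ℝ) ≠ 0 := Nat.cast_ne_zero.2 (Nat.factorial_ne_zero _)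
    have h3 : (((g-k).factorial : ℕ) : ℝ) ≠ 0 := Nat.cast_ne_zero.2 (Nat.factorial_ne_zero _)
    push_cast
    field_simp
  rw [Finset.sum_congr rfl step1, ← Finset.sum_mul]
  have hext : ∑ k ∈ range ((2*g-m)/2+1), ((-1:ℝ)^k * ((2*g-2*k).choose m) * (g.choose k))
      = ∑ k ∈ range (g+1), ((-1:ℝ)^k * ((2*g-2*k).choose m) * (g.choose k)) := by
    refine Finset.sum_subset (by intro k hk; simp at hk ⊢; omega) ?_
    intro k hk1 hk2
    rw [Finset.mem_range] at hk1 hk2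
    rw [Nat.choose_eq_zero_of_lt (by omega)]
    simp
  rw [hext, sum_choose_eq g m hm]
  push_cast
  ring

lemma pair_central {V : Type*} [AddCommGroup V] [Module ℝ V] (a c : V) :
    (ExteriorAlgebra.ι ℝ a * ExteriorAlgebra.ι ℝ c) ∈
      Subring.center (ExteriorAlgebra ℝ V) := by
  have e : ∀ p q : V, ExteriorAlgebra.ι ℝ p * ExteriorAlgebra.ι ℝ q
      = -(ExteriorAlgebra.ι ℝ q * ExteriorAlgebra.ι ℝ p) := fun p q =>
    eq_neg_of_add_eq_zero_left (ExteriorAlgebra.ι_add_mul_swap p q)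
  rw [Subring.mem_center_iff]
  intro x
  induction x using ExteriorAlgebra.induction with
  | algebraMap r => exact Algebra.commutes r _
  | ι v =>
    calc ExteriorAlgebra.ι ℝ v * (ExteriorAlgebra.ι ℝ a * ExteriorAlgebra.ι ℝ c)
        = (ExteriorAlgebra.ι ℝ v * ExteriorAlgebra.ι ℝ a) * ExteriorAlgebra.ι ℝ c := by
          rw [mul_assoc]
      _ = -(ExteriorAlgebra.ι ℝ a * (ExteriorAlgebra.ι ℝ v * ExteriorAlgebra.ι ℝ c)) := by
          rw [e v a]; rw [neg_mul, mul_assoc]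
      _ = ExteriorAlgebra.ι ℝ a * (ExteriorAlgebra.ι ℝ c * ExteriorAlgebra.ι ℝ v) := by
          rw [e v c]; rw [mul_neg, neg_neg]
      _ = ExteriorAlgebra.ι ℝ a * ExteriorAlgebra.ι ℝ c * ExteriorAlgebra.ι ℝ v := by
          rw [mul_assoc]
  | mul p q hp hq => rw [mul_assoc, hq, ← mul_assoc, hp, mul_assoc]
  | add p q hp hq => rw [add_mul, mul_add, hp, hq]
set_option synthInstance.maxHeartbeats 1000000 in
set_option maxHeartbeats 1600000 in
/-- In the exterior algebra of a 4g-dimensional real vector space with basis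
d₁¹,…,d₁^{2g}, d₂¹,…,d₂^{2g} (indexed here by `Fin 2 × Fin (2*g)`), with
γ₁ = Σ_j d₁ʲ∧d₁^{j+g}, γ₂ = Σ_j d₂ʲ∧d₂^{j+g}, γ₁₂ = Σ_j (d₁ʲ∧d₂^{j+g} + d₂ʲ∧d₁^{j+g}),
γ̂ = γ₁+γ₂+γ₁₂ and Ω = ⋀_j (d₁ʲ∧d₂ʲ∧d₁^{j+g}∧d₂^{j+g}), for 0 ≤ m ≤ 2g one has
γ₁₂^m ∧ γ̂^{2g−m} = (Σ_{k=0}^{⌊(2g−m)/2⌋} (−1)^k (2g−2k)!(2g−m)!g!/((2g−2k−m)!k!(g−k)!))·Ω. -/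
theorem stmt8 {g : ℕ} (hg : 1 ≤ g) {V : Type*} [AddCommGroup V] [Module ℝ V]
    (b : Module.Basis (Fin 2 × Fin (2 * g)) ℝ V) (m : ℕ) (hm : m ≤ 2 * g) :
    let d : Fin 2 → Fin (2 * g) → ExteriorAlgebra ℝ V :=
      fun i j => ExteriorAlgebra.ι ℝ (b (i, j))
    let lo : Fin g → Fin (2 * g) := fun j => Fin.castLE (show g ≤ 2 * g by omega) j
    let hi : Fin g → Fin (2 * g) :=
      fun j => Fin.cast (show g + g = 2 * g by omega) (j.addNat g)
    let γ1 := ∑ j : Fin g, d 0 (lo j) * d 0 (hi j)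
    let γ2 := ∑ j : Fin g, d 1 (lo j) * d 1 (hi j)
    let γ12 := ∑ j : Fin g, (d 0 (lo j) * d 1 (hi j) + d 1 (lo j) * d 0 (hi j))
    let Ω := ((List.finRange g).map
      (fun j => d 0 (lo j) * d 1 (lo j) * d 0 (hi j) * d 1 (hi j))).prod
    γ12 ^ m * (γ1 + γ2 + γ12) ^ (2 * g - m) =
      (∑ k ∈ Finset.range ((2 * g - m) / 2 + 1),
        (-1 : ℝ) ^ k * ((2 * g - 2 * k).factorial : ℝ) * ((2 * g - m).factorial : ℝ) *
            (g.factorial : ℝ) /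
          (((2 * g - 2 * k - m).factorial : ℝ) * (k.factorial : ℝ) *
            ((g - k).factorial : ℝ))) • Ω := by
  intro d lo hi γ1 γ2 γ12 Ω
  have e : ∀ p q : V, ExteriorAlgebra.ι ℝ p * ExteriorAlgebra.ι ℝ q
      = -(ExteriorAlgebra.ι ℝ q * ExteriorAlgebra.ι ℝ p) := fun p q =>
    eq_neg_of_add_eq_zero_left (ExteriorAlgebra.ι_add_mul_swap p q)
  have sq : ∀ p : V, ExteriorAlgebra.ι ℝ p * ExteriorAlgebra.ι ℝ p = 0 := fun p =>
    ExteriorAlgebra.ι_sq_zero p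
  have memτ : ∀ j : Fin g, (d 0 (lo j) * d 1 (hi j) + d 1 (lo j) * d 0 (hi j)) ∈
      Subring.center (ExteriorAlgebra ℝ V) :=
    fun j => Subring.add_mem _ (pair_central _ _) (pair_central _ _)
  have memθ : ∀ j : Fin g, (d 0 (lo j) * d 0 (hi j) + d 1 (lo j) * d 1 (hi j) +
      (d 0 (lo j) * d 1 (hi j) + d 1 (lo j) * d 0 (hi j))) ∈
      Subring.center (ExteriorAlgebra ℝ V) :=
    fun j => Subring.add_mem _ (Subring.add_mem _ (pair_central _ _) (pair_central _ _))
      (Subring.add_mem _ (pair_central _ _) (pair_central _ _))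
  have memΩ : ∀ j : Fin g, (d 0 (lo j) * d 1 (lo j) * d 0 (hi j) * d 1 (hi j)) ∈
      Subring.center (ExteriorAlgebra ℝ V) := by
    intro j
    have h := Subring.mul_mem _ (pair_central (b (0, lo j)) (b (1, lo j)))
      (pair_central (b (0, hi j)) (b (1, hi j)))
    rw [show d 0 (lo j) * d 1 (lo j) * d 0 (hi j) * d 1 (hi j)
      = (d 0 (lo j) * d 1 (lo j)) * (d 0 (hi j) * d 1 (hi j)) by rw [mul_assoc]]
    exact h
  set τZ : Fin g → Subring.center (ExteriorAlgebra ℝ V) := fun j => ⟨_, memτ j⟩ with hτZ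
  set θZ : Fin g → Subring.center (ExteriorAlgebra ℝ V) := fun j => ⟨_, memθ j⟩ with hθZ
  set ΩZ : Fin g → Subring.center (ExteriorAlgebra ℝ V) := fun j => ⟨_, memΩ j⟩ with hΩZ
  have relθθ : ∀ j : Fin g, θZ j * θZ j = 0 := fun j => Subtype.ext (by
    exact R1 _ _ _ _ (sq _) (sq _) (sq _) (sq _)
      (e _ _) (e _ _) (e _ _) (e _ _) (e _ _) (e _ _))
  have relττ : ∀ j : Fin g, τZ j * τZ j = ΩZ j + ΩZ j := fun j => Subtype.ext (by
    exact R2 _ _ _ _ (sq _) (sq _) (sq _) (sq _)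
      (e _ _) (e _ _) (e _ _) (e _ _) (e _ _) (e _ _))
  have relτθ : ∀ j : Fin g, τZ j * θZ j = ΩZ j + ΩZ j := fun j => Subtype.ext (by
    exact R3 _ _ _ _ (sq _) (sq _) (sq _) (sq _)
      (e _ _) (e _ _) (e _ _) (e _ _) (e _ _) (e _ _))
  have relΩτ : ∀ j : Fin g, ΩZ j * τZ j = 0 := fun j => Subtype.ext (by
    exact R4 _ _ _ _ (sq _) (sq _) (sq _) (sq _)
      (e _ _) (e _ _) (e _ _) (e _ _) (e _ _) (e _ _))
  have relΩθ : ∀ j : Fin g, ΩZ j * θZ j = 0 := fun j => Subtype.ext (by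
    exact R5 _ _ _ _ (sq _) (sq _) (sq _) (sq _)
      (e _ _) (e _ _) (e _ _) (e _ _) (e _ _) (e _ _))
  have hkey := key τZ θZ ΩZ (List.finRange g)
    (fun j _ => relθθ j) (fun j _ => relττ j) (fun j _ => relτθ j)
    (fun j _ => relΩτ j) (fun j _ => relΩθ j)
    m (2*g-m) (by rw [List.length_finRange]; omega)
  have hmap := congrArg (Subring.center (ExteriorAlgebra ℝ V)).subtype hkey
  simp only [map_mul, map_pow, map_nsmul, map_list_sum, map_list_prod, List.map_map,
    List.length_finRange] at hmap
  have hτc : (⇑(Subring.center (ExteriorAlgebra ℝ V)).subtype ∘ τZ)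
      = fun j : Fin g => d 0 (lo j) * d 1 (hi j) + d 1 (lo j) * d 0 (hi j) := rfl
  have hθc : (⇑(Subring.center (ExteriorAlgebra ℝ V)).subtype ∘ θZ)
      = fun j : Fin g => d 0 (lo j) * d 0 (hi j) + d 1 (lo j) * d 1 (hi j) +
          (d 0 (lo j) * d 1 (hi j) + d 1 (lo j) * d 0 (hi j)) := rfl
  have hΩc : (⇑(Subring.center (ExteriorAlgebra ℝ V)).subtype ∘ ΩZ)
      = fun j : Fin g => d 0 (lo j) * d 1 (lo j) * d 0 (hi j) * d 1 (hi j) := rfl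
  rw [hτc, hθc, hΩc] at hmap
  have hγ12 : γ12 = ((List.finRange g).map
      (fun j => d 0 (lo j) * d 1 (hi j) + d 1 (lo j) * d 0 (hi j))).sum := by
    simp only [γ12]
    exact Fin.sum_univ_def _
  have hγhat : γ1 + γ2 + γ12 = ((List.finRange g).map
      (fun j => d 0 (lo j) * d 0 (hi j) + d 1 (lo j) * d 1 (hi j) +
        (d 0 (lo j) * d 1 (hi j) + d 1 (lo j) * d 0 (hi j)))).sum := by
    simp only [γ1, γ2, γ12]
    rw [← Finset.sum_add_distrib, ← Finset.sum_add_distrib]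
    exact Fin.sum_univ_def _
  rw [hγhat, hγ12, hmap]
  have hstep : stepc g m (2*g-m)
      = g.choose (2*g-m) * m.factorial * (2*g-m).factorial * 2^(2*g-m) := by
    unfold stepc; rw [if_pos (by omega)]
  rw [partB g m hm, hstep, Nat.cast_smul_eq_nsmul]
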